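/- Let K ⊆ ℝ^d be a convex body, Λ ⊆ ℝ^d a lattice and {f_1, …, f_d} a basis of Λ. For I a subset of {1,…,d} of cardinality i, let L_I = span_ℝ{f_j : j ∈ I}. If dim(K ∩ L_I) = i for every i-element subset I of {1,…,d}, then μ_i(K, Λ) ≤ max { μ(K ∩ L_I, Λ ∩ L_I) : I ⊆ {1,…,d}, |I| = i }. -/

import Mathlib

open scoped Pointwise

/-- The `i`-th covering minimum of a convex body `K` with respect to a lattice,
given as a set `L`, inside the ambient space `E`. -/
noncomputable def covMin {E : Type*} [AddCommGroup E] [Module ℝ E]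
    (i : ℕ) (K L : Set E) : ℝ :=
  sInf {μ : ℝ | 0 ≤ μ ∧ ∀ U : AffineSubspace ℝ E, (U : Set E).Nonempty →
    Module.finrank ℝ U.direction = Module.finrank ℝ E - i →
    ((μ • K + L) ∩ (U : Set E)).Nonempty}

/-- The covering radius of `K` with respect to a lattice, given as a set `L`. -/
noncomputable def covRad {E : Type*} [AddCommGroup E] [Module ℝ E]
    (K L : Set E) : ℝ :=
  sInf {μ : ℝ | 0 ≤ μ ∧ μ • K + L = Set.univ}

/-- A convex body: a compact convex set with nonempty interior (full-dimensional). -/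
def IsConvexBody {E : Type*} [AddCommGroup E] [Module ℝ E] [TopologicalSpace E]
    (K : Set E) : Prop :=
  Convex ℝ K ∧ IsCompact K ∧ (interior K).Nonempty

/-- The coordinate subspace `L_I` spanned by the basis vectors `f j`, `j ∈ I`,
of a lattice basis `f` of `Λ`. -/
def coordSpan {d : ℕ} (Λ : Submodule ℤ (Fin d → ℝ)) (f : Module.Basis (Fin d) ℤ Λ)
    (I : Finset (Fin d)) : Submodule ℝ (Fin d → ℝ) :=
  Submodule.span ℝ ((fun j => ((f j : Λ) : Fin d → ℝ)) '' (I : Set (Fin d)))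

/-- Upward closedness of the covering property for convex `K'`. -/
lemma cover_mono {F : Type*} [AddCommGroup F] [Module ℝ F] {K' Γ : Set F}
    (hconv : Convex ℝ K') {c : F} (hc : c ∈ K') {a μ : ℝ} (ha : 0 ≤ a) (haμ : a ≤ μ)
    (hμ : 0 < μ) (hcov : a • K' + Γ = Set.univ) : μ • K' + Γ = Set.univ := by
  ext y
  simp only [Set.mem_univ, iff_true]
  have hy : y - (μ - a) • c ∈ a • K' + Γ := by rw [hcov]; trivial
  obtain ⟨p, hp, g, hg, hpg⟩ := hy
  obtain ⟨k, hk, rfl⟩ := hp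
  refine ⟨μ • ((a / μ) • k + ((μ - a) / μ) • c), ⟨_, hconv hk hc (by positivity)
    (by have := sub_nonneg.2 haμ; positivity) (by field_simp; ring), rfl⟩, g, hg, ?_⟩
  have : μ • ((a / μ) • k + ((μ - a) / μ) • c) = a • k + (μ - a) • c := by
    rw [smul_add, smul_smul, smul_smul]
    rw [mul_div_cancel₀ _ hμ.ne', mul_div_cancel₀ _ hμ.ne']
  rw [this]
  linear_combination (norm := module) hpg

/-- Existence of a covering scale: if `K'` contains a ball and `Γ` covers within
distance `R`. -/
lemma cover_exists {F : Type*} [NormedAddCommGroup F] [NormedSpace ℝ F]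
    {K' Γ : Set F} {c : F} {r : ℝ} (hr : 0 < r) (hball : Metric.ball c r ⊆ K')
    {R : ℝ} (hR : 0 ≤ R) (hcov : ∀ x : F, ∃ g ∈ Γ, ‖x - g‖ ≤ R) :
    ∃ μ : ℝ, 0 ≤ μ ∧ μ • K' + Γ = Set.univ := by
  set μ := (R + 1) / r with hμdef
  have hμpos : 0 < μ := by positivity
  refine ⟨μ, hμpos.le, ?_⟩
  ext y
  simp only [Set.mem_univ, iff_true]
  obtain ⟨g, hg, hgR⟩ := hcov (y - μ • c)
  refine ⟨y - g, ⟨μ⁻¹ • (y - g), hball ?_, smul_inv_smul₀ hμpos.ne' _⟩, g, hg, by module⟩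
  rw [Metric.mem_ball, dist_eq_norm]
  have h1 : μ⁻¹ • (y - g) - c = μ⁻¹ • (y - μ • c - g) := by
    rw [smul_sub, smul_sub, smul_sub, smul_smul, inv_mul_cancel₀ hμpos.ne', one_smul]
    abel
  rw [h1, norm_smul, norm_inv, Real.norm_eq_abs, abs_of_pos hμpos]
  have hRμ : R < μ * r := by
    rw [hμdef, div_mul_cancel₀ _ hr.ne']; linarith
  calc μ⁻¹ * ‖y - μ • c - g‖ ≤ μ⁻¹ * R := by
        apply mul_le_mul_of_nonneg_left _ (by positivity)
        simpa using hgR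
    _ < r := by
        rw [inv_mul_lt_iff₀ hμpos]; linarith [hRμ]

/-- Steinitz exchange: from a basis `v` of `ℝ^d` choose `i` vectors complementing
a subspace `W` of dimension `d - i`. -/
lemma exists_coord_compl {d i : ℕ} (hid : i ≤ d) (v : Fin d → (Fin d → ℝ))
    (hv : LinearIndependent ℝ v) (hvspan : Submodule.span ℝ (Set.range v) = ⊤)
    (W : Submodule ℝ (Fin d → ℝ)) (hW : Module.finrank ℝ W = d - i) :
    ∃ I : Finset (Fin d), I.card = i ∧ Submodule.span ℝ (v '' ↑I) ⊔ W = ⊤ := by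
  classical
  set bW := Module.finBasis ℝ W with hbW
  set wv : Fin (d - i) → (Fin d → ℝ) :=
    fun k => ((bW (Fin.cast hW.symm k) : W) : Fin d → ℝ) with hwv
  have hwv_indep : LinearIndependent ℝ wv := by
    have h1 : LinearIndependent ℝ (fun k : Fin (d - i) => bW (Fin.cast hW.symm k)) :=
      bW.linearIndependent.comp _ (fun a b hab => by
        simpa using congrArg (Fin.cast hW) hab)
    exact h1.map' W.subtype (Submodule.ker_subtype W)
  set s : Set (Fin d → ℝ) := Set.range wv with hs
  have hs_sub : s ⊆ (W : Set (Fin d → ℝ)) := by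
    rintro x ⟨k, rfl⟩; exact (bW (Fin.cast hW.symm k)).2
  have hs_indep : LinearIndependent ℝ ((↑) : s → (Fin d → ℝ)) := hwv_indep.linearIndepOn_id
  have hs_fin : s.Finite := Set.finite_range _
  have hs_card : s.ncard = d - i := by
    rw [hs, ← Nat.card_coe_set_eq, Nat.card_range_of_injective hwv_indep.injective]
    simp
  obtain ⟨b, hbt, hsb, htb, hb_indep⟩ :=
    exists_linearIndepOn_id_extension hs_indep (Set.subset_union_left (t := Set.range v))
  have hb_fin : b.Finite := LinearIndependent.setFinite hb_indep
  have hb_span : Submodule.span ℝ b = ⊤ := by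
    rw [eq_top_iff, ← hvspan]
    exact Submodule.span_le.2 fun x hx => htb (Set.mem_union_right _ hx)
  have hb_card : b.ncard = d := by
    haveI := hb_fin.fintype
    have h2 := finrank_span_set_eq_card hb_indep
    rw [hb_span, ← Set.ncard_eq_toFinset_card'] at h2
    simpa [Module.finrank_fin_fun] using h2.symm
  set I : Finset (Fin d) := Finset.univ.filter (fun j => v j ∈ b \ s) with hI
  have hvinj : Function.Injective v := hv.injective
  have himg : v '' ↑I = b \ s := by
    apply Set.Subset.antisymm
    · rintro x ⟨j, hj, rfl⟩
      simpa [hI] using hj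
    · rintro x hx
      have hxb : x ∈ b := hx.1
      rcases hbt hxb with hxs | ⟨j, rfl⟩
      · exact absurd hxs hx.2
      · exact ⟨j, by simpa [hI] using hx, rfl⟩
  have hIcard : I.card = i := by
    have h3 : (b \ s).ncard = d - (d - i) := by
      rw [Set.ncard_diff hsb hs_fin, hb_card, hs_card]
    rw [Nat.sub_sub_self hid] at h3
    have h4 : (v '' ↑I).ncard = I.card := by
      rw [Set.ncard_image_of_injective _ hvinj, Set.ncard_coe_finset]
    rw [himg, h3] at h4
    exact h4.symm
  refine ⟨I, hIcard, ?_⟩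
  rw [eq_top_iff, ← hb_span]
  apply Submodule.span_le.2
  intro x hxb
  by_cases hxs : x ∈ s
  · exact Submodule.mem_sup_right (hs_sub hxs)
  · exact Submodule.mem_sup_left (Submodule.subset_span (himg ▸ ⟨hxb, hxs⟩))

/-- Main analytic input: on each coordinate subspace, the restricted body is nonempty
and admits some covering scale with respect to the restricted lattice. -/
lemma coordSpan_setup {d i : ℕ} (hi : 1 ≤ i)
    (K : Set (Fin d → ℝ)) (hKconv : Convex ℝ K)
    (Λ : Submodule ℤ (Fin d → ℝ)) (f : Module.Basis (Fin d) ℤ Λ)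
    (hindep : LinearIndependent ℝ (fun j => ((f j : Λ) : Fin d → ℝ)))
    (I : Finset (Fin d)) (hIcard : I.card = i)
    (hdimI : Module.finrank ℝ
      (affineSpan ℝ (K ∩ (coordSpan Λ f I : Set (Fin d → ℝ)))).direction = i) :
    (Subtype.val ⁻¹' K : Set (coordSpan Λ f I)).Nonempty ∧
    {μ : ℝ | 0 ≤ μ ∧ μ • (Subtype.val ⁻¹' K : Set (coordSpan Λ f I)) +
      (Subtype.val ⁻¹' (Λ : Set (Fin d → ℝ)) : Set (coordSpan Λ f I)) = Set.univ}.Nonempty := by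
  classical
  set fvec : Fin d → (Fin d → ℝ) := fun j => ((f j : Λ) : Fin d → ℝ) with hfvec
  set EI := coordSpan Λ f I with hEIdef
  have hEI : EI = Submodule.span ℝ (fvec '' ↑I) := rfl
  set K'' : Set EI := Subtype.val ⁻¹' K with hK''
  have hfvI : LinearIndependent ℝ ((↑) : (fvec '' ↑I) → (Fin d → ℝ)) :=
    hindep.linearIndepOn_id.mono (Set.image_subset_range fvec ↑I)
  haveI : Fintype (fvec '' (↑I : Set (Fin d))) := ((I.finite_toSet).image _).fintype
  have hrankEI : Module.finrank ℝ EI = i := by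
    rw [hEI, finrank_span_set_eq_card hfvI, ← Set.ncard_eq_toFinset_card',
      Set.ncard_image_of_injective _ hindep.injective, Set.ncard_coe_finset, hIcard]
  have hKIimg : K ∩ (EI : Set (Fin d → ℝ)) = Subtype.val '' K'' := by
    rw [hK'', Set.image_preimage_eq_inter_range, Subtype.range_coe]
  have hK''ne : K''.Nonempty := by
    by_contra hne
    rw [Set.not_nonempty_iff_eq_empty] at hne
    rw [hne, Set.image_empty] at hKIimg
    rw [hKIimg, AffineSubspace.span_empty, AffineSubspace.direction_bot] at hdimI
    rw [finrank_bot] at hdimI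
    omega
  refine ⟨hK''ne, ?_⟩
  have hmap : affineSpan ℝ (K ∩ (EI : Set (Fin d → ℝ)))
      = (affineSpan ℝ K'').map (EI.subtype.toAffineMap) := by
    rw [hKIimg, AffineSubspace.map_span]
    rfl
  have hdir : Module.finrank ℝ (affineSpan ℝ K'').direction = i := by
    rw [hmap, AffineSubspace.map_direction, LinearMap.toAffineMap_linear] at hdimI
    rwa [Submodule.finrank_map_subtype_eq] at hdimI
  have hspan_top : affineSpan ℝ K'' = ⊤ := by
    have h1 : (affineSpan ℝ K'').direction = ⊤ := by
      apply Submodule.eq_top_of_finrank_eq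
      rw [hdir, hrankEI]
    rwa [AffineSubspace.direction_eq_top_iff_of_nonempty
      ((affineSpan_nonempty ℝ).2 hK''ne)] at h1
  have hK''conv : Convex ℝ K'' := hKconv.linear_preimage EI.subtype
  have hint : (interior K'').Nonempty :=
    (hK''conv.interior_nonempty_iff_affineSpan_eq_top).2 hspan_top
  obtain ⟨c, hc⟩ := hint
  obtain ⟨r, hr, hball⟩ := Metric.mem_nhds_iff.1 (mem_interior_iff_mem_nhds.1 hc)
  set F : Finset (Fin d → ℝ) := I.image fvec with hF
  set R : ℝ := ∑ v ∈ F, ‖v‖ with hR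
  have hR0 : 0 ≤ R := Finset.sum_nonneg fun v _ => norm_nonneg v
  have hcov : ∀ x : EI, ∃ g ∈ (Subtype.val ⁻¹' (Λ : Set (Fin d → ℝ)) : Set EI),
      ‖x - g‖ ≤ R := by
    intro x
    have hx : (x : Fin d → ℝ) ∈ Submodule.span ℝ (F : Set (Fin d → ℝ)) := by
      rw [hF, Finset.coe_image]
      exact hEI ▸ x.2
    obtain ⟨gf, -, hgf⟩ := Submodule.mem_span_finset.1 hx
    set lam : Fin d → ℝ := ∑ v ∈ F, (⌊gf v⌋ : ℝ) • v with hlam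
    have hlamΛ : lam ∈ Λ := by
      apply Submodule.sum_mem
      intro v hv
      obtain ⟨j, -, rfl⟩ := Finset.mem_image.1 hv
      rw [Int.cast_smul_eq_zsmul]
      exact Submodule.smul_mem _ _ (f j).2
    have hlamEI : lam ∈ EI := by
      apply Submodule.sum_mem
      intro v hv
      apply Submodule.smul_mem
      rw [hEI]
      apply Submodule.subset_span
      have h6 := Finset.mem_coe.2 hv
      rw [hF, Finset.coe_image] at h6
      exact h6
    refine ⟨⟨lam, hlamEI⟩, by simpa using hlamΛ, ?_⟩
    rw [Submodule.coe_norm]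
    have hval : ((x - ⟨lam, hlamEI⟩ : EI) : Fin d → ℝ)
        = ∑ v ∈ F, (gf v - (⌊gf v⌋ : ℝ)) • v := by
      push_cast
      rw [← hgf, hlam, ← Finset.sum_sub_distrib]
      exact Finset.sum_congr rfl fun v _ => (sub_smul _ _ _).symm
    rw [hval]
    calc ‖∑ v ∈ F, (gf v - (⌊gf v⌋ : ℝ)) • v‖ ≤ ∑ v ∈ F, ‖(gf v - (⌊gf v⌋ : ℝ)) • v‖ :=
          norm_sum_le _ _
      _ ≤ ∑ v ∈ F, ‖v‖ := by
          apply Finset.sum_le_sum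
          intro v _
          rw [norm_smul, Real.norm_eq_abs, Int.self_sub_floor, abs_of_nonneg (Int.fract_nonneg _)]
          exact mul_le_of_le_one_left (norm_nonneg v) (Int.fract_lt_one _).le
  obtain ⟨μ, hμ0, hμcov⟩ := cover_exists hr hball hR0 hcov
  exact ⟨μ, hμ0, hμcov⟩

/-- **Theorem (intersection bound).** If `K` is a convex body, `Λ` a lattice with basis
`f_1, …, f_d`, and `dim (K ∩ L_I) = i` for every `i`-element subset `I` of `{1,…,d}`, then
`μ_i(K,Λ) ≤ max { μ(K ∩ L_I, Λ ∩ L_I) : |I| = i }`, the covering radii being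
computed inside `L_I`. -/
theorem covMin_le_intersection_bound
    (d i : ℕ) (hi : 1 ≤ i) (hid : i ≤ d)
    (K : Set (Fin d → ℝ)) (hK : IsConvexBody K)
    (Λ : Submodule ℤ (Fin d → ℝ)) (hΛdisc : DiscreteTopology Λ)
    (hΛfull : Submodule.span ℝ (Λ : Set (Fin d → ℝ)) = ⊤)
    (f : Module.Basis (Fin d) ℤ Λ)
    (hdim : ∀ I : Finset (Fin d), I.card = i →
      Module.finrank ℝ (affineSpan ℝ (K ∩ (coordSpan Λ f I : Set (Fin d → ℝ)))).direction = i) :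
    covMin i K (Λ : Set (Fin d → ℝ)) ≤
      sSup {x : ℝ | ∃ I : Finset (Fin d), I.card = i ∧
        x = covRad (Subtype.val ⁻¹' K : Set (coordSpan Λ f I))
              (Subtype.val ⁻¹' (Λ : Set (Fin d → ℝ)) : Set (coordSpan Λ f I))} := by
  classical
  obtain ⟨hKconv, hKcomp, hKint⟩ := hK
  set fvec : Fin d → (Fin d → ℝ) := fun j => ((f j : Λ) : Fin d → ℝ) with hfvec
  -- the basis vectors span ℝ^d over ℝ
  have hspanv : Submodule.span ℝ (Set.range fvec) = ⊤ := by
    rw [eq_top_iff, ← hΛfull]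
    apply Submodule.span_le.2
    intro x hx
    have h1 : (⟨x, hx⟩ : Λ) ∈ Submodule.span ℤ (Set.range f) := by
      rw [f.span_eq]; trivial
    have h2 : x ∈ Submodule.map Λ.subtype (Submodule.span ℤ (Set.range f)) :=
      ⟨_, h1, rfl⟩
    rw [Submodule.map_span] at h2
    have h3 : x ∈ Submodule.span ℤ (Set.range fvec) := by
      rw [← Set.range_comp] at h2
      exact h2
    exact Submodule.span_subset_span ℤ ℝ _ h3
  have hindep : LinearIndependent ℝ fvec := by
    apply linearIndependent_of_top_le_span_of_card_eq_finrank
    · rw [hspanv]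
    · simp [Module.finrank_fin_fun]
  -- the target set of covering radii
  set T : Set ℝ := {x : ℝ | ∃ I : Finset (Fin d), I.card = i ∧
      x = covRad (Subtype.val ⁻¹' K : Set (coordSpan Λ f I))
            (Subtype.val ⁻¹' (Λ : Set (Fin d → ℝ)) : Set (coordSpan Λ f I))} with hT
  have hTfin : T.Finite := by
    have hsub : T ⊆ (fun I : Finset (Fin d) =>
        covRad (Subtype.val ⁻¹' K : Set (coordSpan Λ f I))
          (Subtype.val ⁻¹' (Λ : Set (Fin d → ℝ)) : Set (coordSpan Λ f I))) '' Set.univ := by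
      rintro x ⟨I, hI, rfl⟩
      exact ⟨I, trivial, rfl⟩
    exact (Set.finite_univ.image _).subset hsub
  obtain ⟨I₀, hI₀sub, hI₀card⟩ := Finset.exists_subset_card_eq
    (show i ≤ (Finset.univ : Finset (Fin d)).card by simpa using hid)
  have hTne : T.Nonempty := ⟨_, I₀, hI₀card, rfl⟩
  have hT0 : ∀ x ∈ T, 0 ≤ x := by
    rintro x ⟨I, hI, rfl⟩
    exact Real.sInf_nonneg fun μ hμ => hμ.1
  have hμstar0 : 0 ≤ sSup T :=
    le_trans (hT0 _ hTne.some_mem) (le_csSup hTfin.bddAbove hTne.some_mem)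
  -- it suffices to show `covMin ≤ μ` for every `μ > sSup T`
  refine le_of_forall_gt_imp_ge_of_dense fun μ hμgt => ?_
  have hμpos : 0 < μ := lt_of_le_of_lt hμstar0 hμgt
  apply csInf_le
  · exact ⟨0, fun x hx => hx.1⟩
  refine ⟨hμpos.le, ?_⟩
  intro U hUne hUdim
  -- choose a coordinate subspace complementing the direction of U
  have hW : Module.finrank ℝ U.direction = d - i := by
    rwa [Module.finrank_fin_fun] at hUdim
  obtain ⟨I, hIcard, hsup⟩ := exists_coord_compl hid fvec hindep hspanv U.direction hW
  -- covering on the coordinate subspace at scale μ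
  obtain ⟨hK''ne, hAne⟩ := coordSpan_setup hi K hKconv Λ f hindep I hIcard (hdim I hIcard)
  have hcovI : μ • (Subtype.val ⁻¹' K : Set (coordSpan Λ f I)) +
      (Subtype.val ⁻¹' (Λ : Set (Fin d → ℝ)) : Set (coordSpan Λ f I)) = Set.univ := by
    have hle : covRad (Subtype.val ⁻¹' K : Set (coordSpan Λ f I))
        (Subtype.val ⁻¹' (Λ : Set (Fin d → ℝ)) : Set (coordSpan Λ f I)) ≤ sSup T :=
      le_csSup hTfin.bddAbove ⟨I, hIcard, rfl⟩
    have hlt : covRad (Subtype.val ⁻¹' K : Set (coordSpan Λ f I))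
        (Subtype.val ⁻¹' (Λ : Set (Fin d → ℝ)) : Set (coordSpan Λ f I)) < μ :=
      lt_of_le_of_lt hle hμgt
    obtain ⟨a, ⟨ha0, hacov⟩, haμ⟩ := exists_lt_of_csInf_lt hAne hlt
    exact cover_mono (hKconv.linear_preimage (coordSpan Λ f I).subtype)
      hK''ne.some_mem ha0 haμ.le hμpos hacov
  -- find the intersection point
  obtain ⟨u, hu⟩ := hUne
  have humem : u ∈ Submodule.span ℝ (fvec '' ↑I) ⊔ U.direction := by
    rw [hsup]; trivial
  obtain ⟨p, hp, w, hw, hpw⟩ := Submodule.mem_sup.1 humem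
  have hpU : p ∈ U := by
    have h7 := AffineSubspace.vadd_mem_of_mem_direction (U.direction.neg_mem hw) hu
    have h8 : -w +ᵥ u = p := by
      rw [vadd_eq_add]
      rw [← hpw]
      abel
    rwa [h8] at h7
  have hpEI : p ∈ coordSpan Λ f I := hp
  have hpmem : (⟨p, hpEI⟩ : coordSpan Λ f I) ∈
      μ • (Subtype.val ⁻¹' K : Set (coordSpan Λ f I)) +
      (Subtype.val ⁻¹' (Λ : Set (Fin d → ℝ)) : Set (coordSpan Λ f I)) := by
    rw [hcovI]; trivial
  obtain ⟨a, ⟨k, hk, rfl⟩, g, hg, hag⟩ := hpmem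
  refine ⟨p, ⟨?_, hpU⟩⟩
  have hpval : μ • (k : Fin d → ℝ) + (g : Fin d → ℝ) = p := by
    have := congrArg (Subtype.val) hag
    simpa using this
  rw [← hpval]
  exact Set.add_mem_add (Set.smul_mem_smul_set hk) hg
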